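/- arXiv:1006.4408 — 7 statements merged into one kernel-verified Lean document; each statement's English description precedes it below -/
import Mathlib

section
/- Fix an integer M ≥ 1 and a real R > 0. If λ* > 0 maximizes S(M,·) over (0,∞), i.e. S(M,λ*) ≥ S(M,λ) for all λ > 0, then Σ_{k=0}^{M−1} (λ*)^k/k! = (λ*)^M/(M−1)! (equivalently, Pr{X ≤ M−1} = M·Pr{X = M} for X Poisson with mean λ*). -/
open Finset Real

/-- Asymptotic throughput of slotted ALOHA with MPR capability `M` at Poisson
attempt rate `λ`: `S(M,λ) = R · λ · ∑_{k=0}^{M−1} (λ^k/k!) e^{−λ}`. -/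
noncomputable def S (M : ℕ) (R lam : ℝ) : ℝ :=
  R * lam * ∑ k ∈ Finset.range M, lam ^ k / (Nat.factorial k : ℝ) * Real.exp (-lam)

lemma key_sum (x : ℝ) (N : ℕ) :
    ∑ k ∈ Finset.range (N + 1), ((k : ℝ) + 1) * x ^ k / (Nat.factorial k : ℝ)
      = ∑ k ∈ Finset.range (N + 1), x ^ k / (Nat.factorial k : ℝ)
        + ∑ k ∈ Finset.range N, x ^ (k + 1) / (Nat.factorial k : ℝ) := by
  induction N with
  | zero => simp
  | succ n ih =>
    rw [Finset.sum_range_succ, ih]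
    have h4 : ∑ k ∈ Finset.range (n + 1 + 1), x ^ k / (Nat.factorial k : ℝ)
        = ∑ k ∈ Finset.range (n + 1), x ^ k / (Nat.factorial k : ℝ)
          + x ^ (n + 1) / (Nat.factorial (n + 1) : ℝ) := Finset.sum_range_succ _ _
    have h5 : ∑ k ∈ Finset.range (n + 1), x ^ (k + 1) / (Nat.factorial k : ℝ)
        = ∑ k ∈ Finset.range n, x ^ (k + 1) / (Nat.factorial k : ℝ)
          + x ^ (n + 1) / (Nat.factorial n : ℝ) := Finset.sum_range_succ _ _
    rw [h4, h5]
    have hfac : (Nat.factorial (n + 1) : ℝ) = ((n : ℝ) + 1) * (Nat.factorial n : ℝ) := by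
      push_cast [Nat.factorial_succ]; ring
    have h1 : (Nat.factorial n : ℝ) ≠ 0 := Nat.cast_ne_zero.mpr (Nat.factorial_ne_zero n)
    have h2 : ((n : ℝ) + 1) ≠ 0 := by positivity
    have hterm : ((n : ℝ) + 1 + 1) * x ^ (n + 1) / (Nat.factorial (n + 1) : ℝ)
        = x ^ (n + 1) / (Nat.factorial (n + 1) : ℝ) + x ^ (n + 1) / (Nat.factorial n : ℝ) := by
      rw [hfac]; field_simp; ring
    push_cast at hterm ⊢
    linarith

/-- if `λ* > 0` maximizes `S(M,·)` over `(0,∞)`, then the first-order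
condition `∑_{k=0}^{M−1} (λ*)^k/k! = (λ*)^M/(M−1)!` holds. -/
theorem stmt1 (M : ℕ) (hM : 1 ≤ M) (R : ℝ) (hR : 0 < R) (lamStar : ℝ)
    (hpos : 0 < lamStar) (hmax : ∀ lam : ℝ, 0 < lam → S M R lam ≤ S M R lamStar) :
    ∑ k ∈ Finset.range M, lamStar ^ k / (Nat.factorial k : ℝ) =
      lamStar ^ M / (Nat.factorial (M - 1) : ℝ) := by
  -- rewrite S as a nicer function
  have hfun : S M R = fun x : ℝ =>
      R * ((∑ k ∈ Finset.range M, x ^ (k + 1) / (Nat.factorial k : ℝ)) * Real.exp (-x)) := by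
    funext x
    simp only [S]
    rw [← Finset.sum_mul]
    have hs : ∑ k ∈ Finset.range M, x ^ (k + 1) / (Nat.factorial k : ℝ)
        = x * ∑ k ∈ Finset.range M, x ^ k / (Nat.factorial k : ℝ) := by
      rw [Finset.mul_sum]
      exact Finset.sum_congr rfl fun k _ => by ring
    rw [hs]; ring
  -- local max
  have hloc : IsLocalMax (S M R) lamStar := by
    filter_upwards [IsOpen.mem_nhds isOpen_Ioi (Set.mem_Ioi.mpr hpos)] with y hy
    exact hmax y hy
  -- derivative
  set A := ∑ k ∈ Finset.range M, ((k : ℝ) + 1) * lamStar ^ k / (Nat.factorial k : ℝ) with hA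
  set B := ∑ k ∈ Finset.range M, lamStar ^ (k + 1) / (Nat.factorial k : ℝ) with hB
  have hP : HasDerivAt (fun x : ℝ => ∑ k ∈ Finset.range M, x ^ (k + 1) / (Nat.factorial k : ℝ))
      A lamStar := by
    rw [hA]
    apply HasDerivAt.fun_sum
    intro k _
    have := (hasDerivAt_pow (k + 1) lamStar).div_const (Nat.factorial k : ℝ)
    convert this using 1
    all_goals first
      | rfl
      | (push_cast
         ring)
  have hE : HasDerivAt (fun x : ℝ => Real.exp (-x)) (-Real.exp (-lamStar)) lamStar := by
    simpa [Function.comp_def] using (Real.hasDerivAt_exp (-lamStar)).comp lamStar (hasDerivAt_neg lamStar)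
  have hD : HasDerivAt (S M R)
      (R * (A * Real.exp (-lamStar) + B * (-Real.exp (-lamStar)))) lamStar := by
    rw [hfun]
    exact ((hP.mul hE).const_mul R)
  have hD0 : R * (A * Real.exp (-lamStar) + B * (-Real.exp (-lamStar))) = 0 := by
    rw [← hD.deriv]
    exact hloc.deriv_eq_zero
  have hAB : A = B := by
    have h3 : R * Real.exp (-lamStar) * (A - B) = 0 := by rw [← hD0]; ring
    have := (mul_eq_zero.mp h3).resolve_left
      (mul_ne_zero hR.ne' (Real.exp_pos (-lamStar)).ne')
    linarith
  -- algebra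
  obtain ⟨N, rfl⟩ : ∃ N, M = N + 1 := ⟨M - 1, (Nat.succ_pred_eq_of_pos hM).symm⟩
  have hkey := key_sum lamStar N
  rw [hB, Finset.sum_range_succ (f := fun k => lamStar ^ (k + 1) / (Nat.factorial k : ℝ))] at hAB
  rw [hA, hkey] at hAB
  simp only [Nat.add_sub_cancel]
  linarith
end

section
/- Fix an integer M ≥ 1 and a real R > 0. If λ > 0 satisfies the first-order condition Σ_{k=0}^{M−1} λ^k/k! = λ^M/(M−1)!, then S(M+1,λ) = ((M+1)/M) · S(M,λ). -/
open Finset Real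

/-- if `λ > 0` satisfies the first-order condition
`∑_{k=0}^{M−1} λ^k/k! = λ^M/(M−1)!`, then `S(M+1,λ) = ((M+1)/M) · S(M,λ)`. -/
theorem stmt2 (M : ℕ) (hM : 1 ≤ M) (R : ℝ) (hR : 0 < R) (lam : ℝ) (hpos : 0 < lam)
    (hfoc : ∑ k ∈ Finset.range M, lam ^ k / (Nat.factorial k : ℝ) =
      lam ^ M / (Nat.factorial (M - 1) : ℝ)) :
    S (M + 1) R lam = ((M : ℝ) + 1) / (M : ℝ) * S M R lam := by
  have hMfac : (Nat.factorial M : ℝ) = (M : ℝ) * (Nat.factorial (M - 1) : ℝ) := by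
    obtain ⟨m, rfl⟩ := Nat.exists_eq_add_of_le hM
    simp [Nat.add_comm 1 m, Nat.factorial_succ]
  have hM0 : (M : ℝ) ≠ 0 := by positivity
  have hfac0 : (Nat.factorial (M - 1) : ℝ) ≠ 0 := by
    exact_mod_cast Nat.factorial_ne_zero _
  have hterm : lam ^ M / (Nat.factorial M : ℝ) =
      (∑ k ∈ Finset.range M, lam ^ k / (Nat.factorial k : ℝ)) / (M : ℝ) := by
    rw [hfoc, hMfac]
    field_simp
  simp only [S]
  rw [← Finset.sum_mul, ← Finset.sum_mul, Finset.sum_range_succ]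
  rw [hterm]
  rw [add_div' _ _ _ hM0]
  ring
end

section
/- (Super-linearity, Theorem 1) For every integer M ≥ 1 and real R > 0, the maximum achievable asymptotic throughput per unit MPR capability is nondecreasing: S*(M+1)/(M+1) ≥ S*(M)/M, where S*(M) = sup_{λ>0} S(M,λ). -/
open Finset Real

/-- Maximum achievable asymptotic throughput `S*(M) = sup_{λ>0} S(M,λ)`. -/
noncomputable def Sstar (M : ℕ) (R : ℝ) : ℝ :=
  sSup ((fun lam => S M R lam) '' Set.Ioi (0 : ℝ))

/-- polynomial part -/
noncomputable def Ppoly (M : ℕ) (x : ℝ) : ℝ :=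
  ∑ k ∈ Finset.range M, x ^ (k + 1) / (Nat.factorial k : ℝ)

lemma S_eq (M : ℕ) (R x : ℝ) : S M R x = R * (Ppoly M x * Real.exp (-x)) := by
  unfold S Ppoly
  rw [Finset.sum_mul, Finset.mul_sum, Finset.mul_sum]
  exact Finset.sum_congr rfl fun k _ => by ring

lemma hasDeriv (M : ℕ) (R x : ℝ) :
    HasDerivAt (S M R)
      (R * (((∑ k ∈ Finset.range M, ((k : ℝ) + 1) * x ^ k / (Nat.factorial k : ℝ))
        - Ppoly M x) * Real.exp (-x))) x := by
  have hP : HasDerivAt (fun y : ℝ => Ppoly M y)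
      (∑ k ∈ Finset.range M, ((k : ℝ) + 1) * x ^ k / (Nat.factorial k : ℝ)) x := by
    apply HasDerivAt.fun_sum
    intro k _
    have h := (hasDerivAt_pow (k + 1) x).div_const (Nat.factorial k : ℝ)
    simpa [Nat.cast_add, Nat.cast_one] using h
  have hE : HasDerivAt (fun y : ℝ => Real.exp (-y)) (-Real.exp (-x)) x := by
    have h := (Real.hasDerivAt_exp (-x)).comp x (hasDerivAt_neg x)
    simpa [Function.comp_def] using h
  have h := (hP.fun_mul hE).const_mul R
  have hfun : S M R = fun y => R * (Ppoly M y * Real.exp (-y)) := funext (S_eq M R)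
  rw [hfun]
  convert h using 1
  all_goals first | rfl | ring

lemma Ppoly_succ (M : ℕ) (x : ℝ) :
    Ppoly (M + 1) x = Ppoly M x + x ^ (M + 1) / (Nat.factorial M : ℝ) :=
  Finset.sum_range_succ _ M

/-- At a critical point, `Ppoly M x = M * x^(M+1)/M!`. -/
lemma crit_eq (m : ℕ) (x : ℝ)
    (h : (∑ k ∈ Finset.range (m + 1), ((k : ℝ) + 1) * x ^ k / (Nat.factorial k : ℝ))
        = Ppoly (m + 1) x) :
    Ppoly (m + 1) x = x ^ (m + 2) / (Nat.factorial m : ℝ) := by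
  -- P' = A + shifted-P
  have key : (∑ k ∈ Finset.range (m + 1), ((k : ℝ) + 1) * x ^ k / (Nat.factorial k : ℝ))
      = (∑ k ∈ Finset.range (m + 1), x ^ k / (Nat.factorial k : ℝ)) + Ppoly m x := by
    have h1 : ∀ k ∈ Finset.range (m + 1),
        ((k : ℝ) + 1) * x ^ k / (Nat.factorial k : ℝ)
          = x ^ k / (Nat.factorial k : ℝ) + (k : ℝ) * x ^ k / (Nat.factorial k : ℝ) := by
      intro k _; ring
    rw [Finset.sum_congr rfl h1, Finset.sum_add_distrib]
    congr 1
    rw [Finset.sum_range_succ']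
    have h0 : ((0 : ℕ) : ℝ) * x ^ 0 / (Nat.factorial 0 : ℝ) = 0 := by norm_num
    rw [h0, add_zero]
    unfold Ppoly
    apply Finset.sum_congr rfl
    intro k _
    have hfac : ((Nat.factorial (k + 1) : ℝ)) = ((k : ℝ) + 1) * (Nat.factorial k : ℝ) := by
      rw [Nat.factorial_succ]; push_cast; ring
    have hk : (Nat.factorial k : ℝ) ≠ 0 := Nat.cast_ne_zero.2 (Nat.factorial_ne_zero k)
    have hk1 : ((k : ℝ) + 1) ≠ 0 := by positivity
    rw [hfac]
    field_simp
    push_cast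
    ring
  -- so A = x^(m+1)/m!
  have hA : (∑ k ∈ Finset.range (m + 1), x ^ k / (Nat.factorial k : ℝ))
      = x ^ (m + 1) / (Nat.factorial m : ℝ) := by
    have h2 := key.symm.trans h
    rw [Ppoly_succ] at h2
    -- A + Ppoly m x = Ppoly m x + x^(m+1)/m!
    linarith [h2]
  -- Ppoly (m+1) x = x * A
  have hxA : Ppoly (m + 1) x = x * (∑ k ∈ Finset.range (m + 1), x ^ k / (Nat.factorial k : ℝ)) := by
    unfold Ppoly
    rw [Finset.mul_sum]
    exact Finset.sum_congr rfl fun k _ => by ring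
  rw [hxA, hA]
  ring

/-- global bound: S M R x ≤ R * M for x ≥ 0 -/
lemma S_le (M : ℕ) (R x : ℝ) (hR : 0 ≤ R) (hx : 0 ≤ x) : S M R x ≤ R * M := by
  rw [S_eq]
  have hE : (0:ℝ) < Real.exp (-x) := Real.exp_pos _
  have hP : Ppoly M x ≤ (M : ℝ) * Real.exp x := by
    unfold Ppoly
    have step1 : ∀ k ∈ Finset.range M,
        x ^ (k + 1) / (Nat.factorial k : ℝ)
          ≤ (M : ℝ) * (x ^ (k + 1) / (Nat.factorial (k + 1) : ℝ)) := by
      intro k hk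
      have hkM : (k : ℝ) + 1 ≤ (M : ℝ) := by
        have := Finset.mem_range.1 hk
        exact_mod_cast Nat.succ_le_of_lt this
      have hfac : ((Nat.factorial (k + 1) : ℝ)) = ((k : ℝ) + 1) * (Nat.factorial k : ℝ) := by
        rw [Nat.factorial_succ]; push_cast; ring
      have hk0 : (0:ℝ) < (Nat.factorial k : ℝ) := by
        exact_mod_cast Nat.factorial_pos k
      have hxp : (0:ℝ) ≤ x ^ (k + 1) := pow_nonneg hx _
      have heq : x ^ (k+1) / (Nat.factorial k : ℝ)
          = ((k:ℝ)+1) * (x ^ (k + 1) / (Nat.factorial (k+1) : ℝ)) := by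
        rw [hfac]
        have hk1 : ((k:ℝ)+1) ≠ 0 := by positivity
        field_simp
      rw [heq]
      exact mul_le_mul_of_nonneg_right hkM (by positivity)
    calc ∑ k ∈ Finset.range M, x ^ (k + 1) / (Nat.factorial k : ℝ)
        ≤ ∑ k ∈ Finset.range M, (M : ℝ) * (x ^ (k + 1) / (Nat.factorial (k + 1) : ℝ)) :=
          Finset.sum_le_sum step1
      _ = (M : ℝ) * ∑ k ∈ Finset.range M, x ^ (k + 1) / (Nat.factorial (k + 1) : ℝ) := by
          rw [Finset.mul_sum]
      _ ≤ (M : ℝ) * Real.exp x := by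
          apply mul_le_mul_of_nonneg_left _ (Nat.cast_nonneg M)
          have hsum : ∑ k ∈ Finset.range M, x ^ (k + 1) / (Nat.factorial (k + 1) : ℝ)
              ≤ ∑ j ∈ Finset.range (M + 1), x ^ j / (Nat.factorial j : ℝ) := by
            rw [Finset.sum_range_succ']
            have : (0:ℝ) ≤ x ^ 0 / (Nat.factorial 0 : ℝ) := by norm_num
            linarith
          exact hsum.trans (Real.sum_le_exp_of_nonneg hx (M + 1))
  calc R * (Ppoly M x * Real.exp (-x))
      ≤ R * ((M : ℝ) * Real.exp x * Real.exp (-x)) := by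
        apply mul_le_mul_of_nonneg_left _ hR
        exact mul_le_mul_of_nonneg_right hP hE.le
    _ = R * M := by
        rw [mul_assoc, ← Real.exp_add]
        simp

lemma bdd (M : ℕ) (R : ℝ) (hR : 0 ≤ R) :
    BddAbove ((fun lam => S M R lam) '' Set.Ioi (0 : ℝ)) := by
  refine ⟨R * M, ?_⟩
  rintro y ⟨x, hx, rfl⟩
  exact S_le M R x hR (le_of_lt hx)

lemma S_tendsto (M : ℕ) (R : ℝ) : Filter.Tendsto (S M R) Filter.atTop (nhds 0) := by
  have hfun : S M R = fun x => ∑ k ∈ Finset.range M,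
      (R / (Nat.factorial k : ℝ)) * (x ^ (k + 1) * Real.exp (-x)) := by
    funext x
    rw [S_eq]
    unfold Ppoly
    rw [Finset.sum_mul, Finset.mul_sum]
    exact Finset.sum_congr rfl fun k _ => by ring
  rw [hfun]
  have h : Filter.Tendsto
      (fun x : ℝ => ∑ k ∈ Finset.range M,
        (R / (Nat.factorial k : ℝ)) * (x ^ (k + 1) * Real.exp (-x)))
      Filter.atTop (nhds (∑ k ∈ Finset.range M, (R / (Nat.factorial k : ℝ)) * 0)) := by
    apply tendsto_finset_sum
    intro k _
    exact (Real.tendsto_pow_mul_exp_neg_atTop_nhds_zero (k + 1)).const_mul _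
  simpa using h

lemma S_cont (M : ℕ) (R : ℝ) : Continuous (S M R) := by
  have hfun : S M R = fun x => R * (Ppoly M x * Real.exp (-x)) := funext (S_eq M R)
  rw [hfun]
  apply Continuous.mul continuous_const
  apply Continuous.mul
  · unfold Ppoly
    exact continuous_finset_sum _ fun k _ => (continuous_pow (k + 1)).div_const _
  · exact Real.continuous_exp.comp continuous_neg

/-- Super-linearity, Theorem 1: `S*(M+1)/(M+1) ≥ S*(M)/M`. -/
theorem stmt4 (M : ℕ) (hM : 1 ≤ M) (R : ℝ) (hR : 0 < R) :
    Sstar M R / (M : ℝ) ≤ Sstar (M + 1) R / ((M : ℝ) + 1) := by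
  obtain ⟨m, rfl⟩ : ∃ m, M = m + 1 := ⟨M - 1, (Nat.succ_pred_eq_of_pos hM).symm⟩
  set M := m + 1 with hMdef
  have hMpos : (0:ℝ) < (M:ℝ) := by exact_mod_cast Nat.succ_pos m
  -- S M R 1 > 0
  have h1pos : 0 < S M R 1 := by
    rw [S_eq]
    have : 0 < Ppoly M 1 := by
      unfold Ppoly
      apply Finset.sum_pos
      · intro k _
        positivity
      · exact ⟨0, Finset.mem_range.2 (Nat.succ_pos m)⟩
    positivity
  -- find b
  have hev : ∀ᶠ x in Filter.atTop, S M R x < S M R 1 :=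
    (S_tendsto M R).eventually_lt_const h1pos
  obtain ⟨b0, hb0⟩ := Filter.eventually_atTop.1 hev
  set b : ℝ := max b0 2 with hbdef
  have hb2 : (2:ℝ) ≤ b := le_max_right _ _
  have hbtail : ∀ x ≥ b, S M R x < S M R 1 := fun x hx =>
    hb0 x ((le_max_left _ _).trans hx)
  -- max on Icc 0 b
  obtain ⟨c, hcmem, hcmax⟩ := (isCompact_Icc (a := (0:ℝ)) (b := b)).exists_isMaxOn
    ⟨0, Set.left_mem_Icc.2 (by linarith)⟩ (S_cont M R).continuousOn
  have h1mem : (1:ℝ) ∈ Set.Icc (0:ℝ) b := ⟨by norm_num, by linarith⟩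
  have hc1 : S M R 1 ≤ S M R c := hcmax h1mem
  have hcpos2 : 0 < S M R c := lt_of_lt_of_le h1pos hc1
  have hS0 : S M R 0 = 0 := by simp [S]
  have hc0 : 0 < c := by
    rcases lt_or_eq_of_le hcmem.1 with h | h
    · exact h
    · exfalso; rw [h] at hS0; linarith
  have hcb : c < b := by
    rcases lt_or_eq_of_le hcmem.2 with h | h
    · exact h
    · exfalso
      have := hbtail c (le_of_eq h.symm)
      linarith
  -- c is a local max, so derivative is zero
  have hloc : IsLocalMax (S M R) c := hcmax.isLocalMax (Icc_mem_nhds hc0 hcb)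
  have hderiv0 := hloc.hasDerivAt_eq_zero (hasDeriv M R c)
  -- extract P' c = P c
  have hE : Real.exp (-c) ≠ 0 := (Real.exp_pos _).ne'
  have hPP : (∑ k ∈ Finset.range M, ((k : ℝ) + 1) * c ^ k / (Nat.factorial k : ℝ))
      = Ppoly M c := by
    have h2 : (∑ k ∈ Finset.range M, ((k : ℝ) + 1) * c ^ k / (Nat.factorial k : ℝ))
        - Ppoly M c = 0 := by
      rcases mul_eq_zero.1 hderiv0 with h | h
      · exact absurd h hR.ne'
      · rcases mul_eq_zero.1 h with h' | h'
        · exact h'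
        · exact absurd h' hE
    exact sub_eq_zero.1 h2
  have hPc : Ppoly M c = c ^ (M + 1) / (Nat.factorial m : ℝ) := crit_eq m c hPP
  -- key equality : S (M+1) R c = S M R c * (M+1)/M
  have hfacM : ((Nat.factorial M : ℝ)) = ((M : ℝ)) * (Nat.factorial m : ℝ) := by
    rw [hMdef, Nat.factorial_succ]; push_cast; ring
  have hkey : S (M + 1) R c = S M R c * ((M : ℝ) + 1) / (M : ℝ) := by
    rw [S_eq, S_eq, Ppoly_succ, hPc, hfacM]
    have hm0 : (Nat.factorial m : ℝ) ≠ 0 := Nat.cast_ne_zero.2 (Nat.factorial_ne_zero m)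
    field_simp
  -- Sstar M R = S M R c
  have hSstarM : Sstar M R = S M R c := by
    apply le_antisymm
    · apply Real.sSup_le
      · rintro y ⟨x, hx, rfl⟩
        rcases le_or_gt x b with hxb | hxb
        · exact hcmax ⟨le_of_lt hx, hxb⟩
        · exact le_trans (hbtail x hxb.le).le hc1
      · exact hcpos2.le
    · exact le_csSup (bdd M R hR.le) ⟨c, hc0, rfl⟩
  -- Sstar (M+1) R ≥ S (M+1) R c
  have hSstar1 : S (M + 1) R c ≤ Sstar (M + 1) R :=
    le_csSup (bdd (M + 1) R hR.le) ⟨c, hc0, rfl⟩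
  rw [hSstarM]
  have hM1pos : (0:ℝ) < (M:ℝ) + 1 := by linarith
  rw [div_le_div_iff₀ hMpos hM1pos]
  have : S M R c * ((M : ℝ) + 1) = S (M + 1) R c * (M : ℝ) := by
    rw [hkey]; field_simp
  rw [this]
  exact mul_le_mul_of_nonneg_right hSstar1 hMpos.le
end

section
/- (Asymptotic channel-access efficiency, Theorem 2) For every fixed real R > 0, lim_{M→∞} S*(M)/(M·R) = 1, where S*(M) = sup_{λ>0} S(M,λ). -/
open Finset Real Filter

lemma aux_sum_le_one (M : ℕ) (lam : ℝ) (hl : 0 ≤ lam) :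
    ∑ k ∈ Finset.range M, lam ^ k / (Nat.factorial k : ℝ) * Real.exp (-lam) ≤ 1 := by
  have h1 : ∑ k ∈ Finset.range M, lam ^ k / (Nat.factorial k : ℝ) * Real.exp (-lam)
      = (∑ k ∈ Finset.range M, lam ^ k / (Nat.factorial k : ℝ)) * Real.exp (-lam) := by
    rw [Finset.sum_mul]
  rw [h1]
  have h2 : (∑ k ∈ Finset.range M, lam ^ k / (Nat.factorial k : ℝ)) * Real.exp (-lam)
      ≤ Real.exp lam * Real.exp (-lam) :=
    mul_le_mul_of_nonneg_right (Real.sum_le_exp_of_nonneg hl M) (Real.exp_pos _).le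
  rw [← Real.exp_add] at h2
  simpa using h2

lemma aux_upper (M : ℕ) (R lam : ℝ) (hR : 0 ≤ R) (hl : 0 ≤ lam) : S M R lam ≤ R * M := by
  set E := Real.exp (-lam) with hE
  have hE0 : 0 < E := Real.exp_pos _
  have key : lam * ∑ k ∈ Finset.range M, lam ^ k / (Nat.factorial k : ℝ) * E ≤ M := by
    have step1 : lam * ∑ k ∈ Finset.range M, lam ^ k / (Nat.factorial k : ℝ) * E
        ≤ ∑ k ∈ Finset.range M, (M : ℝ) * (lam ^ (k+1) / (Nat.factorial (k+1) : ℝ) * E) := by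
      rw [Finset.mul_sum]
      apply Finset.sum_le_sum
      intro k hk
      have hkM : (k : ℝ) + 1 ≤ M := by exact_mod_cast Finset.mem_range.mp hk
      have hfac : (Nat.factorial (k+1) : ℝ) = ((k : ℝ) + 1) * (Nat.factorial k : ℝ) := by
        push_cast [Nat.factorial_succ]; ring
      have heq : lam * (lam ^ k / (Nat.factorial k : ℝ) * E)
          = ((k : ℝ) + 1) * (lam ^ (k+1) / (Nat.factorial (k+1) : ℝ) * E) := by
        rw [hfac, pow_succ]
        have : (Nat.factorial k : ℝ) ≠ 0 := by positivity
        field_simp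
      rw [heq]
      apply mul_le_mul_of_nonneg_right hkM
      positivity
    rw [← Finset.mul_sum] at step1
    have step2 : ∑ k ∈ Finset.range M, lam ^ (k+1) / (Nat.factorial (k+1) : ℝ) * E ≤ 1 := by
      have hsum : ∑ j ∈ Finset.range (M+1), lam ^ j / (Nat.factorial j : ℝ) * E
          = (∑ k ∈ Finset.range M, lam ^ (k+1) / (Nat.factorial (k+1) : ℝ) * E)
            + lam ^ 0 / (Nat.factorial 0 : ℝ) * E := Finset.sum_range_succ' _ M
      have h0 : (0:ℝ) ≤ lam ^ 0 / (Nat.factorial 0 : ℝ) * E := by positivity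
      have := aux_sum_le_one (M+1) lam hl
      rw [hsum] at this
      linarith
    calc lam * ∑ k ∈ Finset.range M, lam ^ k / (Nat.factorial k : ℝ) * E
        ≤ (M : ℝ) * ∑ k ∈ Finset.range M, lam ^ (k+1) / (Nat.factorial (k+1) : ℝ) * E := step1
      _ ≤ (M : ℝ) * 1 := by
          apply mul_le_mul_of_nonneg_left step2 (Nat.cast_nonneg M)
      _ = M := mul_one _
  have : S M R lam = R * (lam * ∑ k ∈ Finset.range M, lam ^ k / (Nat.factorial k : ℝ) * E) := by
    rw [S]; ring
  rw [this]
  exact mul_le_mul_of_nonneg_left key hR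

lemma aux_sstar_le (M : ℕ) (R : ℝ) (hR : 0 ≤ R) : Sstar M R ≤ R * M := by
  apply Real.sSup_le
  · rintro x ⟨l, hl, rfl⟩
    exact aux_upper M R l hR (le_of_lt hl)
  · positivity

lemma aux_le_sstar (M : ℕ) (R : ℝ) (hR : 0 ≤ R) (lam : ℝ) (hl : 0 < lam) :
    S M R lam ≤ Sstar M R := by
  apply le_csSup
  · exact ⟨R * M, by rintro x ⟨l, hl', rfl⟩; exact aux_upper M R l hR hl'.le⟩
  · exact ⟨lam, hl, rfl⟩

lemma aux_tail (M : ℕ) (hM : 1 ≤ M) (c : ℝ) (hc0 : 0 < c) (hc1 : c < 1) :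
    Real.exp (c * M) - ∑ k ∈ Finset.range M, (c * M) ^ k / (Nat.factorial k : ℝ)
      ≤ (c * M) ^ M / (Nat.factorial M : ℝ) * (1 - c)⁻¹ := by
  set lam := c * (M : ℝ) with hlam
  have hl0 : 0 ≤ lam := by positivity
  have hsummable : Summable (fun n : ℕ => lam ^ n / (Nat.factorial n : ℝ)) :=
    Real.summable_pow_div_factorial lam
  have hexp : Real.exp lam = ∑' n : ℕ, lam ^ n / (Nat.factorial n : ℝ) := by
    rw [Real.exp_eq_exp_ℝ, NormedSpace.exp_eq_tsum_div]
  have hsplit := Summable.sum_add_tsum_nat_add (f := fun n : ℕ => lam ^ n / (Nat.factorial n : ℝ)) M hsummable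
  have htail_summable : Summable (fun i : ℕ => lam ^ (i + M) / (Nat.factorial (i + M) : ℝ)) :=
    (summable_nat_add_iff M).mpr hsummable
  have hgeom_summable : Summable (fun i : ℕ => lam ^ M / (Nat.factorial M : ℝ) * c ^ i) :=
    (summable_geometric_of_lt_one hc0.le hc1).mul_left _
  have hterm : ∀ i : ℕ, lam ^ (i + M) / (Nat.factorial (i + M) : ℝ)
      ≤ lam ^ M / (Nat.factorial M : ℝ) * c ^ i := by
    intro i
    have hfac : (Nat.factorial M : ℝ) * (M : ℝ) ^ i ≤ (Nat.factorial (M + i) : ℝ) := by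
      have h := Nat.factorial_mul_pow_le_factorial (m := M) (n := i)
      have h2 : (Nat.factorial M) * M ^ i ≤ Nat.factorial M * (M + 1) ^ i :=
        Nat.mul_le_mul_left _ (Nat.pow_le_pow_left (Nat.le_succ M) i)
      exact_mod_cast h2.trans h
    have hMpos : (0:ℝ) < (M : ℝ) := by exact_mod_cast hM
    have h1 : lam ^ (i + M) / (Nat.factorial (i + M) : ℝ)
        ≤ lam ^ (i + M) / ((Nat.factorial M : ℝ) * (M : ℝ) ^ i) := by
      apply div_le_div_of_nonneg_left (by positivity) (by positivity)
      rw [Nat.add_comm i M] at *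
      exact hfac
    refine h1.trans (le_of_eq ?_)
    have : lam ^ (i + M) = c ^ i * (M:ℝ) ^ i * lam ^ M := by
      rw [pow_add, hlam, mul_pow]
    rw [this]
    field_simp
  have htsum_le : ∑' i : ℕ, lam ^ (i + M) / (Nat.factorial (i + M) : ℝ)
      ≤ lam ^ M / (Nat.factorial M : ℝ) * (1 - c)⁻¹ := by
    calc ∑' i : ℕ, lam ^ (i + M) / (Nat.factorial (i + M) : ℝ)
        ≤ ∑' i : ℕ, lam ^ M / (Nat.factorial M : ℝ) * c ^ i :=
          Summable.tsum_le_tsum hterm htail_summable hgeom_summable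
      _ = lam ^ M / (Nat.factorial M : ℝ) * ∑' i : ℕ, c ^ i := tsum_mul_left
      _ = lam ^ M / (Nat.factorial M : ℝ) * (1 - c)⁻¹ := by
          rw [tsum_geometric_of_lt_one hc0.le hc1]
  have : Real.exp lam - ∑ k ∈ Finset.range M, lam ^ k / (Nat.factorial k : ℝ)
      = ∑' i : ℕ, lam ^ (i + M) / (Nat.factorial (i + M) : ℝ) := by
    rw [hexp, ← hsplit]; ring
  rw [this]
  exact htsum_le

lemma aux_poisson_peak (M : ℕ) (c : ℝ) (hc0 : 0 < c) (hc1 : c < 1) :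
    Real.exp (-(c * M)) * ((c * M) ^ M / (Nat.factorial M : ℝ))
      ≤ (c * Real.exp (1 - c)) ^ M := by
  have hMM : (M : ℝ) ^ M / (Nat.factorial M : ℝ) ≤ Real.exp M := by
    have hterm : (M : ℝ) ^ M / (Nat.factorial M : ℝ)
        ≤ ∑ i ∈ Finset.range (M + 1), (M : ℝ) ^ i / (Nat.factorial i : ℝ) := by
      apply Finset.single_le_sum (f := fun i => (M : ℝ) ^ i / (Nat.factorial i : ℝ))
      · intro i _; positivity
      · exact Finset.self_mem_range_succ M
    exact hterm.trans (Real.sum_le_exp_of_nonneg (Nat.cast_nonneg M) (M + 1))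
  have hrw : (c * Real.exp (1 - c)) ^ M
      = c ^ M * (Real.exp M * Real.exp (-(c * M))) := by
    rw [mul_pow, ← Real.exp_nat_mul, ← Real.exp_add]
    ring_nf
  rw [hrw]
  have h1 : Real.exp (-(c * M)) * ((c * M) ^ M / (Nat.factorial M : ℝ))
      = c ^ M * ((M:ℝ) ^ M / (Nat.factorial M : ℝ)) * Real.exp (-(c * M)) := by
    rw [mul_pow]; ring
  rw [h1]
  have : c ^ M * ((M:ℝ) ^ M / (Nat.factorial M : ℝ)) ≤ c ^ M * Real.exp M :=
    mul_le_mul_of_nonneg_left hMM (by positivity)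
  calc c ^ M * ((M:ℝ) ^ M / (Nat.factorial M : ℝ)) * Real.exp (-(c * M))
      ≤ c ^ M * Real.exp M * Real.exp (-(c * M)) :=
        mul_le_mul_of_nonneg_right this (Real.exp_pos _).le
    _ = c ^ M * (Real.exp M * Real.exp (-(c * M))) := by ring

lemma aux_lower (M : ℕ) (hM : 1 ≤ M) (R : ℝ) (hR : 0 ≤ R) (c : ℝ) (hc0 : 0 < c) (hc1 : c < 1) :
    R * (c * M) * (1 - (c * Real.exp (1 - c)) ^ M * (1 - c)⁻¹) ≤ S M R (c * M) := by
  set lam := c * (M : ℝ) with hlam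
  have hl0 : 0 ≤ lam := by positivity
  have hsum : ∑ k ∈ Finset.range M, lam ^ k / (Nat.factorial k : ℝ) * Real.exp (-lam)
      = (∑ k ∈ Finset.range M, lam ^ k / (Nat.factorial k : ℝ)) * Real.exp (-lam) := by
    rw [Finset.sum_mul]
  have htail := aux_tail M hM c hc0 hc1
  have hpeak := aux_poisson_peak M c hc0 hc1
  have hE : Real.exp lam * Real.exp (-lam) = 1 := by rw [← Real.exp_add]; simp
  have hkey : 1 - (c * Real.exp (1 - c)) ^ M * (1 - c)⁻¹
      ≤ (∑ k ∈ Finset.range M, lam ^ k / (Nat.factorial k : ℝ)) * Real.exp (-lam) := by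
    have h1 : (Real.exp lam - lam ^ M / (Nat.factorial M : ℝ) * (1 - c)⁻¹) * Real.exp (-lam)
        ≤ (∑ k ∈ Finset.range M, lam ^ k / (Nat.factorial k : ℝ)) * Real.exp (-lam) := by
      apply mul_le_mul_of_nonneg_right _ (Real.exp_pos _).le
      linarith [htail]
    refine le_trans ?_ h1
    have h2 : (Real.exp lam - lam ^ M / (Nat.factorial M : ℝ) * (1 - c)⁻¹) * Real.exp (-lam)
        = 1 - Real.exp (-lam) * (lam ^ M / (Nat.factorial M : ℝ)) * (1 - c)⁻¹ := by
      rw [sub_mul, hE]; ring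
    rw [h2]
    have hc1' : (0:ℝ) ≤ (1 - c)⁻¹ := by
      have : (0:ℝ) < 1 - c := by linarith
      positivity
    have h3 : Real.exp (-lam) * (lam ^ M / (Nat.factorial M : ℝ)) * (1 - c)⁻¹
        ≤ (c * Real.exp (1 - c)) ^ M * (1 - c)⁻¹ :=
      mul_le_mul_of_nonneg_right hpeak hc1'
    linarith
  have : S M R lam = R * lam *
      ((∑ k ∈ Finset.range M, lam ^ k / (Nat.factorial k : ℝ)) * Real.exp (-lam)) := by
    rw [S, hsum]
  rw [this]
  exact mul_le_mul_of_nonneg_left hkey (by positivity)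


/-- Theorem 2, asymptotic channel-access efficiency:
`S*(M)/(M·R) → 1` as `M → ∞`. -/
theorem stmt12 (R : ℝ) (hR : 0 < R) :
    Filter.Tendsto (fun M : ℕ => Sstar M R / ((M : ℝ) * R)) Filter.atTop (nhds 1) := by
  rw [Metric.tendsto_atTop]
  intro ε hε
  set δ : ℝ := min (ε / 4) (1 / 4) with hδdef
  have hδ0 : 0 < δ := lt_min (by linarith) (by norm_num)
  have hδ4 : δ ≤ 1 / 4 := min_le_right _ _
  have hδε : δ ≤ ε / 4 := min_le_left _ _
  set c : ℝ := 1 - δ with hcdef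
  have hc0 : 0 < c := by rw [hcdef]; linarith
  have hc1 : c < 1 := by rw [hcdef]; linarith
  set q : ℝ := c * Real.exp (1 - c) with hqdef
  have hq0 : 0 ≤ q := by positivity
  have hq1 : q < 1 := by
    have hne : c - 1 ≠ 0 := by intro h; rw [sub_eq_zero] at h; exact hc1.ne h
    have h := Real.add_one_lt_exp hne
    have h2 : c < Real.exp (c - 1) := by linarith
    have h3 : q < Real.exp (c - 1) * Real.exp (1 - c) :=
      mul_lt_mul_of_pos_right h2 (Real.exp_pos _)
    rw [← Real.exp_add] at h3
    simpa using h3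
  have hpow : Filter.Tendsto (fun M : ℕ => q ^ M) Filter.atTop (nhds 0) :=
    tendsto_pow_atTop_nhds_zero_of_lt_one hq0 hq1
  obtain ⟨N1, hN1⟩ := Metric.tendsto_atTop.mp hpow (δ * δ) (by positivity)
  refine ⟨max N1 1, fun M hMN => ?_⟩
  have hM1 : 1 ≤ M := le_trans (le_max_right _ _) hMN
  have hMq := hN1 M (le_trans (le_max_left _ _) hMN)
  rw [Real.dist_eq, sub_zero, abs_of_nonneg (pow_nonneg hq0 M)] at hMq
  have hMpos : (0:ℝ) < M := by exact_mod_cast hM1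
  have hMR : 0 < (M : ℝ) * R := by positivity
  set x := Sstar M R / ((M : ℝ) * R) with hxdef
  have hupper : x ≤ 1 := by
    rw [hxdef, div_le_one hMR]
    calc Sstar M R ≤ R * M := aux_sstar_le M R hR.le
      _ = (M : ℝ) * R := by ring
  set b : ℝ := q ^ M * (1 - c)⁻¹ with hbdef
  have h1c : (1 - c) = δ := by rw [hcdef]; ring
  have hb0 : 0 ≤ b := by
    rw [hbdef, h1c]; positivity
  have hbδ : b ≤ δ := by
    rw [hbdef, h1c]
    calc q ^ M * δ⁻¹ ≤ (δ * δ) * δ⁻¹ :=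
          mul_le_mul_of_nonneg_right hMq.le (inv_nonneg.2 hδ0.le)
      _ = δ := by field_simp
  have hlow : 1 - δ - b ≤ x := by
    have h1 := aux_lower M hM1 R hR.le c hc0 hc1
    have h2 := aux_le_sstar M R hR.le (c * M) (by positivity)
    have h3 : R * (c * M) * (1 - b) ≤ Sstar M R := by
      rw [hbdef, hqdef]; exact h1.trans h2
    have h4 : c * (1 - b) ≤ x := by
      rw [hxdef, le_div_iff₀ hMR]
      calc c * (1 - b) * ((M : ℝ) * R) = R * (c * M) * (1 - b) := by ring
        _ ≤ Sstar M R := h3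
    have h5 : 1 - δ - b ≤ c * (1 - b) := by
      rw [hcdef]; nlinarith
    linarith
  rw [Real.dist_eq, abs_lt]
  constructor <;> nlinarith
end

section
/- (Recursion (A1)) For all integers 1 ≤ M ≤ N, every real R > 0, and every real p with 0 ≤ p < 1: S_N(M,p) = R·(N·p/(1−p))·Σ_{k=0}^{M−1} C(N,k) p^k (1−p)^{N−k} − (p/(1−p))·S_N(M−1,p), where S_N(0,p) = 0. -/
open Finset Real

/-- Finite-population throughput of slotted ALOHA with `N` stations, MPR
capability `M`, per-station rate `R` and transmission probability `p`:
`S_N(M,p) = R · ∑_{k=1}^{M} k · C(N,k) · p^k (1−p)^{N−k}` (so `S_N(0,p) = 0`). -/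
noncomputable def SN (N M : ℕ) (R p : ℝ) : ℝ :=
  R * ∑ k ∈ Finset.Icc 1 M, (k : ℝ) * (N.choose k : ℝ) * p ^ k * (1 - p) ^ (N - k)

/-- Recursion (A1): for `1 ≤ M ≤ N`, `R > 0` and `0 ≤ p < 1`,
`S_N(M,p) = R·(Np/(1−p))·∑_{k=0}^{M−1} C(N,k) p^k (1−p)^{N−k} − (p/(1−p))·S_N(M−1,p)`. -/
theorem stmt13 (N M : ℕ) (hM : 1 ≤ M) (hMN : M ≤ N) (R : ℝ) (hR : 0 < R)
    (p : ℝ) (hp0 : 0 ≤ p) (hp1 : p < 1) :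
    SN N M R p =
      R * ((N : ℝ) * p / (1 - p)) *
        (∑ k ∈ Finset.range M, (N.choose k : ℝ) * p ^ k * (1 - p) ^ (N - k)) -
      p / (1 - p) * SN N (M - 1) R p := by
  have hq : (0:ℝ) < 1 - p := by linarith
  have hqne : (1:ℝ) - p ≠ 0 := ne_of_gt hq
  unfold SN
  have hshift : ∑ k ∈ Finset.Icc 1 M, (k : ℝ) * (N.choose k : ℝ) * p ^ k * (1 - p) ^ (N - k)
      = ∑ k ∈ Finset.range M,
          (((k+1 : ℕ)) : ℝ) * (N.choose (k+1) : ℝ) * p ^ (k+1) * (1 - p) ^ (N - (k+1)) := by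
    rw [← Finset.Ico_add_one_right_eq_Icc, Finset.sum_Ico_eq_sum_range]
    simp [add_comm]
  have hB : ∑ k ∈ Finset.Icc 1 (M-1), (k : ℝ) * (N.choose k : ℝ) * p ^ k * (1 - p) ^ (N - k)
      = ∑ k ∈ Finset.range M, (k : ℝ) * (N.choose k : ℝ) * p ^ k * (1 - p) ^ (N - k) := by
    apply Finset.sum_subset
    · intro k hk
      simp only [Finset.mem_Icc] at hk
      simp only [Finset.mem_range]
      omega
    · intro k hk hk'
      simp only [Finset.mem_range] at hk
      simp only [Finset.mem_Icc] at hk'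
      have : k = 0 := by omega
      simp [this]
  rw [hshift, hB, Finset.mul_sum, Finset.mul_sum, Finset.mul_sum, Finset.mul_sum,
    ← Finset.sum_sub_distrib]
  apply Finset.sum_congr rfl
  intro k hk
  simp only [Finset.mem_range] at hk
  have hkN : k < N := lt_of_lt_of_le hk hMN
  have hchoose : ((N.choose (k+1) : ℝ)) * (k+1) = (N.choose k : ℝ) * ((N:ℝ) - k) := by
    have := Nat.choose_succ_right_eq N k
    have hcast : ((N - k : ℕ) : ℝ) = (N:ℝ) - k := by
      rw [Nat.cast_sub (le_of_lt hkN)]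
    calc ((N.choose (k+1) : ℝ)) * (k+1)
        = ((N.choose (k+1) * (k+1) : ℕ) : ℝ) := by push_cast; ring
      _ = ((N.choose k * (N - k) : ℕ) : ℝ) := by rw [this]
      _ = (N.choose k : ℝ) * ((N:ℝ) - k) := by push_cast [Nat.cast_sub (le_of_lt hkN)]; ring
  have hpow : (1 - p) ^ (N - k) = (1 - p) ^ (N - (k+1)) * (1 - p) := by
    rw [← pow_succ]
    congr 1
    omega
  rw [hpow]
  field_simp
  push_cast
  linear_combination p ^ (k + 1) * hchoose
end

section
/- (First-order condition (A6)) Fix integers 1 ≤ M < N and a real R > 0. If p* ∈ (0,1) maximizes S_N(M,·) over [0,1], then S_N(M,p*) = R·M·(M+1)·C(N,M+1)·(p*)^{M+1}(1−p*)^{N−M−1}; that is, S_N(M,p*) equals R·M·(M+1)·Pr{X = M+1} for X binomial with parameters N and p*. -/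
open Finset Real

/-- First-order condition (A6): for `1 ≤ M < N`, `R > 0`, if
`p* ∈ (0,1)` maximizes `S_N(M,·)` over `[0,1]`, then
`S_N(M,p*) = R·M·(M+1)·C(N,M+1)·(p*)^{M+1}(1−p*)^{N−M−1}`. -/
theorem stmt15 (N M : ℕ) (hM : 1 ≤ M) (hMN : M < N) (R : ℝ) (hR : 0 < R)
    (pStar : ℝ) (hp0 : 0 < pStar) (hp1 : pStar < 1)
    (hmax : ∀ p : ℝ, 0 ≤ p → p ≤ 1 → SN N M R p ≤ SN N M R pStar) :
    SN N M R pStar =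
      R * (M : ℝ) * ((M : ℝ) + 1) * (N.choose (M + 1) : ℝ) * pStar ^ (M + 1) *
        (1 - pStar) ^ (N - M - 1) := by
  set b : ℕ → ℝ := fun k => (k : ℝ) * (N.choose k : ℝ) * pStar ^ k * (1 - pStar) ^ (N - k)
    with hb
  -- the derivative of SN at pStar
  have hderiv : HasDerivAt (fun p => SN N M R p)
      (R * ∑ k ∈ Finset.Icc 1 M, (k : ℝ) * (N.choose k : ℝ) *
        ((k : ℝ) * pStar ^ (k - 1) * (1 - pStar) ^ (N - k)
          - ((N - k : ℕ) : ℝ) * pStar ^ k * (1 - pStar) ^ (N - k - 1))) pStar := by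
    unfold SN
    apply HasDerivAt.const_mul
    apply HasDerivAt.fun_sum
    intro k hk
    have hfun : (fun p : ℝ => (k : ℝ) * (N.choose k : ℝ) * p ^ k * (1 - p) ^ (N - k))
        = fun p : ℝ => ((k : ℝ) * (N.choose k : ℝ)) * (p ^ k * (1 - p) ^ (N - k)) := by
      funext p; ring
    rw [hfun]
    have h1 : HasDerivAt (fun p : ℝ => p ^ k) ((k : ℝ) * pStar ^ (k - 1)) pStar :=
      hasDerivAt_pow k pStar
    have h2 : HasDerivAt (fun p : ℝ => (1 - p) ^ (N - k))
        ((((N - k : ℕ) : ℝ)) * (1 - pStar) ^ (N - k - 1) * (-1)) pStar := by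
      have h0 : HasDerivAt (fun p : ℝ => 1 - p) (-1) pStar := (hasDerivAt_id pStar).const_sub 1
      exact h0.pow (N - k)
    convert (h1.fun_mul h2).const_mul ((k : ℝ) * (N.choose k : ℝ)) using 1
    all_goals first | rfl | ring
  -- local max ⇒ derivative zero
  have hloc : IsLocalMax (fun p => SN N M R p) pStar := by
    have hnhds : Set.Ioo (0 : ℝ) 1 ∈ nhds pStar := Ioo_mem_nhds hp0 hp1
    exact Filter.eventually_of_mem hnhds fun p hp => hmax p hp.1.le hp.2.le
  have hd0 := hloc.hasDerivAt_eq_zero hderiv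
  -- per-term identity after multiplying by pStar
  have hterm : ∀ k ∈ Finset.Icc 1 M,
      pStar * ((k : ℝ) * (N.choose k : ℝ) *
        ((k : ℝ) * pStar ^ (k - 1) * (1 - pStar) ^ (N - k)
          - ((N - k : ℕ) : ℝ) * pStar ^ k * (1 - pStar) ^ (N - k - 1)))
        = (k : ℝ) * b k - (k : ℝ) * b (k + 1) := by
    intro k hk
    simp only [Finset.mem_Icc] at hk
    have hkN : k < N := lt_of_le_of_lt hk.2 hMN
    have hpk : pStar ^ k = pStar ^ (k - 1) * pStar := by
      rw [← pow_succ]; congr 1; omega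
    have h1p : (1 - pStar) ^ (N - k) = (1 - pStar) ^ (N - k - 1) * (1 - pStar) := by
      rw [← pow_succ]; congr 1; omega
    have hcastN : ((k : ℝ) + 1) * (N.choose (k + 1) : ℝ) = ((N - k : ℕ) : ℝ) * (N.choose k : ℝ) := by
      have h : (k + 1) * N.choose (k + 1) = (N - k) * N.choose k := by
        rw [mul_comm, Nat.choose_succ_right_eq, mul_comm]
      exact_mod_cast h
    have hNsub : N - (k + 1) = N - k - 1 := by omega
    obtain ⟨j, rfl⟩ : ∃ j, k = j + 1 := ⟨k - 1, by omega⟩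
    simp only [hb, hNsub, Nat.add_sub_cancel] at *
    push_cast at hcastN ⊢
    rw [h1p]
    linear_combination ((j : ℝ) + 1) * pStar ^ j * pStar ^ 2 * (1 - pStar) ^ (N - (j+1) - 1) * hcastN
  -- telescoping
  have tele : ∑ k ∈ Finset.Icc 1 M, ((k : ℝ) * b k - (k : ℝ) * b (k + 1))
      = (∑ k ∈ Finset.Icc 1 M, b k) - (M : ℝ) * b (M + 1) := by
    have hre : ∀ f : ℕ → ℝ, ∑ k ∈ Finset.Icc 1 M, f k = ∑ i ∈ Finset.range M, f (1 + i) := by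
      intro f
      rw [show Finset.Icc 1 M = Finset.Ico 1 (M + 1) from by rw [Finset.Ico_add_one_right_eq_Icc],
        Finset.sum_Ico_eq_sum_range]
      simp
    rw [hre, hre]
    set g : ℕ → ℝ := fun i => (i : ℝ) * b (i + 1) with hg
    have hsplit : ∀ i ∈ Finset.range M,
        ((1 + i : ℕ) : ℝ) * b (1 + i) - ((1 + i : ℕ) : ℝ) * b ((1 + i) + 1)
          = b (1 + i) + (g i - g (i + 1)) := by
      intro i _
      simp only [hg]
      push_cast
      have : (1 + i) + 1 = (i + 1) + 1 := by omega
      rw [this, show 1 + i = i + 1 from by omega]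
      ring
    rw [Finset.sum_congr rfl hsplit, Finset.sum_add_distrib, Finset.sum_range_sub' g M]
    simp [hg]
    ring
  -- assemble
  have hsum0 : (∑ k ∈ Finset.Icc 1 M, (k : ℝ) * (N.choose k : ℝ) *
        ((k : ℝ) * pStar ^ (k - 1) * (1 - pStar) ^ (N - k)
          - ((N - k : ℕ) : ℝ) * pStar ^ k * (1 - pStar) ^ (N - k - 1))) = 0 := by
    rcases mul_eq_zero.mp hd0 with h | h
    · exact absurd h (ne_of_gt hR)
    · exact h
  have hfinal : (∑ k ∈ Finset.Icc 1 M, b k) = (M : ℝ) * b (M + 1) := by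
    have h := congrArg (fun x => pStar * x) hsum0
    simp only [mul_zero] at h
    rw [Finset.mul_sum, Finset.sum_congr rfl hterm, tele] at h
    linarith
  have hSN : SN N M R pStar = R * ∑ k ∈ Finset.Icc 1 M, b k := rfl
  rw [hSN, hfinal]
  simp only [hb]
  have hNsub : N - (M + 1) = N - M - 1 := by omega
  rw [hNsub]
  push_cast
  ring
end

section
/- (Super-linearity with finite population, Theorem 3) For all integers 1 ≤ M < N and every real R > 0: (sup_{p∈[0,1]} S_N(M+1,p))/(M+1) ≥ (sup_{p∈[0,1]} S_N(M,p))/M. -/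
open Finset Real

lemma aux_hasDerivAt (N m : ℕ) (p : ℝ) :
    HasDerivAt (fun x : ℝ => ∑ k ∈ Finset.Icc 1 m,
        (k : ℝ) * (N.choose k : ℝ) * x ^ k * (1 - x) ^ (N - k))
      (∑ k ∈ Finset.Icc 1 m, (k : ℝ) * (N.choose k : ℝ) *
        ((k : ℝ) * p ^ (k - 1) * (1 - p) ^ (N - k) +
          p ^ k * (((N - k : ℕ) : ℝ) * (1 - p) ^ (N - k - 1) * (-1)))) p := by
  apply HasDerivAt.fun_sum
  intro k hk
  have h1 : HasDerivAt (fun x : ℝ => 1 - x) (-1) p := by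
    simpa using (hasDerivAt_id p).const_sub 1
  have h2 := h1.fun_pow (N - k)
  have h3 := (hasDerivAt_pow k p).fun_mul h2
  have h4 := h3.const_mul ((k : ℝ) * (N.choose k : ℝ))
  convert h4 using 1 <;> try rfl
  funext x; ring

lemma aux_telescope (M : ℕ) (G : ℕ → ℝ) :
    ∑ k ∈ Finset.Icc 1 M, (G k - G (k + 1)) = G 1 - G (M + 1) := by
  induction M with
  | zero => simp
  | succ n ih =>
      rw [Finset.sum_Icc_succ_top (by omega : 1 ≤ n + 1), ih]
      ring

lemma aux_identity (N M : ℕ) (hM : 1 ≤ M) (hMN : M < N) (p : ℝ) :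
    p * (∑ k ∈ Finset.Icc 1 M, (k : ℝ) * (N.choose k : ℝ) *
        ((k : ℝ) * p ^ (k - 1) * (1 - p) ^ (N - k) +
          p ^ k * (((N - k : ℕ) : ℝ) * (1 - p) ^ (N - k - 1) * (-1)))) =
      (∑ k ∈ Finset.Icc 1 M, (k : ℝ) * (N.choose k : ℝ) * p ^ k * (1 - p) ^ (N - k)) -
        (M : ℝ) * (((M : ℝ) + 1) * (N.choose (M + 1) : ℝ) * p ^ (M + 1) * (1 - p) ^ (N - (M + 1))) := by
  set G : ℕ → ℝ := fun j => (j : ℝ) * ((j : ℝ) - 1) * (N.choose j : ℝ) * p ^ j * (1 - p) ^ (N - j)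
    with hG
  have htel := aux_telescope M G
  rw [Finset.mul_sum]
  have hstep : ∀ k ∈ Finset.Icc 1 M,
      p * ((k : ℝ) * (N.choose k : ℝ) *
        ((k : ℝ) * p ^ (k - 1) * (1 - p) ^ (N - k) +
          p ^ k * (((N - k : ℕ) : ℝ) * (1 - p) ^ (N - k - 1) * (-1)))) =
      (k : ℝ) * (N.choose k : ℝ) * p ^ k * (1 - p) ^ (N - k) + (G k - G (k + 1)) := by
    intro k hk
    simp only [Finset.mem_Icc] at hk
    have hk1 : 1 ≤ k := hk.1
    have hkN : k < N := lt_of_le_of_lt hk.2 hMN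
    have hp : p * p ^ (k - 1) = p ^ k := by
      rw [← pow_succ']
      congr 1
      omega
    have hcast : ((N - k : ℕ) : ℝ) = (N : ℝ) - (k : ℝ) := by
      have := Nat.cast_sub (le_of_lt hkN) (R := ℝ)
      exact this
    have hchoose : ((N.choose (k + 1) : ℝ)) * ((k : ℝ) + 1) = (N.choose k : ℝ) * ((N : ℝ) - (k : ℝ)) := by
      have h := Nat.choose_succ_right_eq N k
      have : ((N.choose (k + 1) * (k + 1) : ℕ) : ℝ) = ((N.choose k * (N - k) : ℕ) : ℝ) := by
        exact_mod_cast congrArg (Nat.cast : ℕ → ℝ) h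
      push_cast [Nat.cast_sub (le_of_lt hkN)] at this
      linarith [this]
    have hexp : N - (k + 1) = N - k - 1 := by omega
    have hq : (1 - p) ^ (N - k) = (1 - p) ^ (N - k - 1) * (1 - p) := by
      rw [← pow_succ]
      congr 1
      omega
    simp only [hG, hexp]
    push_cast
    rw [hcast, hq]
    linear_combination ((k : ℝ) ^ 2 * (N.choose k : ℝ) * (1 - p) ^ (N - k - 1) * (1 - p)) * hp +
      ((k : ℝ) * p ^ (k + 1) * (1 - p) ^ (N - k - 1)) * hchoose
  rw [Finset.sum_congr rfl hstep, Finset.sum_add_distrib, htel]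
  have hG1 : G 1 = 0 := by simp [hG]
  have hGM : G (M + 1) =
      (M : ℝ) * (((M : ℝ) + 1) * (N.choose (M + 1) : ℝ) * p ^ (M + 1) * (1 - p) ^ (N - (M + 1))) := by
    simp only [hG]
    push_cast
    ring
  rw [hG1, hGM]
  ring

/-- Theorem 3, super-linearity with finite population: for
`1 ≤ M < N` and `R > 0`,
`(sup_{p∈[0,1]} S_N(M+1,p))/(M+1) ≥ (sup_{p∈[0,1]} S_N(M,p))/M`. -/
theorem stmt16 (N M : ℕ) (hM : 1 ≤ M) (hMN : M < N) (R : ℝ) (hR : 0 < R) :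
    sSup ((fun p => SN N M R p) '' Set.Icc (0 : ℝ) 1) / (M : ℝ) ≤
      sSup ((fun p => SN N (M + 1) R p) '' Set.Icc (0 : ℝ) 1) / ((M : ℝ) + 1) := by
  have hM0 : (0 : ℝ) < (M : ℝ) := by exact_mod_cast hM
  -- continuity
  have hcont : ∀ m : ℕ, ContinuousOn (fun p => SN N m R p) (Set.Icc (0:ℝ) 1) := by
    intro m
    apply Continuous.continuousOn
    unfold SN
    continuity
  -- maximizer for M
  obtain ⟨p₀, hp₀mem, hmax⟩ :=
    (isCompact_Icc).exists_isMaxOn (s := Set.Icc (0:ℝ) 1) ⟨0, by norm_num⟩ (hcont M)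
  have hmax' : ∀ x ∈ Set.Icc (0:ℝ) 1, SN N M R x ≤ SN N M R p₀ := fun x hx => hmax hx
  -- sSup of image equals value at p₀
  have himg : sSup ((fun p => SN N M R p) '' Set.Icc (0:ℝ) 1) = SN N M R p₀ := by
    apply le_antisymm
    · apply csSup_le ⟨_, Set.mem_image_of_mem _ hp₀mem⟩
      rintro y ⟨x, hx, rfl⟩
      exact hmax' x hx
    · exact le_csSup ⟨SN N M R p₀, by rintro y ⟨x, hx, rfl⟩; exact hmax' x hx⟩
        (Set.mem_image_of_mem _ hp₀mem)
  -- positivity at 1/2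
  have hhalf : 0 < SN N M R (1/2) := by
    unfold SN
    apply mul_pos hR
    apply Finset.sum_pos
    · intro k hk
      simp only [Finset.mem_Icc] at hk
      have hk1 : (0:ℝ) < (k:ℝ) := by exact_mod_cast hk.1
      have hck : (0:ℝ) < (N.choose k : ℝ) := by
        exact_mod_cast Nat.choose_pos (le_trans hk.2 hMN.le)
      have h12 : (0:ℝ) < 1 - 1/2 := by norm_num
      positivity
    · exact ⟨1, by simp [hM]⟩
  -- boundary values are zero
  have hzero : SN N M R 0 = 0 := by
    unfold SN
    rw [Finset.sum_eq_zero, mul_zero]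
    intro k hk
    simp only [Finset.mem_Icc] at hk
    rw [zero_pow (by omega : k ≠ 0)]
    ring
  have hone : SN N M R 1 = 0 := by
    unfold SN
    rw [Finset.sum_eq_zero, mul_zero]
    intro k hk
    simp only [Finset.mem_Icc] at hk
    rw [sub_self, zero_pow (by omega : N - k ≠ 0)]
    ring
  have hpos : 0 < SN N M R p₀ :=
    lt_of_lt_of_le hhalf (hmax' (1/2) (by norm_num))
  have hio : p₀ ∈ Set.Ioo (0:ℝ) 1 := by
    constructor
    · rcases lt_or_eq_of_le hp₀mem.1 with h | h
      · exact h
      · exfalso; rw [← h, hzero] at hpos; exact lt_irrefl 0 hpos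
    · rcases lt_or_eq_of_le hp₀mem.2 with h | h
      · exact h
      · exfalso; rw [h, hone] at hpos; exact lt_irrefl 0 hpos
  -- derivative is zero at p₀
  have hder := aux_hasDerivAt N M p₀
  have hSder : HasDerivAt (fun p => SN N M R p)
      (R * ∑ k ∈ Finset.Icc 1 M, (k : ℝ) * (N.choose k : ℝ) *
        ((k : ℝ) * p₀ ^ (k - 1) * (1 - p₀) ^ (N - k) +
          p₀ ^ k * (((N - k : ℕ) : ℝ) * (1 - p₀) ^ (N - k - 1) * (-1)))) p₀ := by
    unfold SN
    exact hder.const_mul R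
  have hlocmax : IsLocalMax (fun p => SN N M R p) p₀ :=
    hmax.isLocalMax (Icc_mem_nhds hio.1 hio.2)
  have h0 : R * ∑ k ∈ Finset.Icc 1 M, (k : ℝ) * (N.choose k : ℝ) *
        ((k : ℝ) * p₀ ^ (k - 1) * (1 - p₀) ^ (N - k) +
          p₀ ^ k * (((N - k : ℕ) : ℝ) * (1 - p₀) ^ (N - k - 1) * (-1))) = 0 :=
    hlocmax.hasDerivAt_eq_zero hSder
  have hD0 : ∑ k ∈ Finset.Icc 1 M, (k : ℝ) * (N.choose k : ℝ) *
        ((k : ℝ) * p₀ ^ (k - 1) * (1 - p₀) ^ (N - k) +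
          p₀ ^ k * (((N - k : ℕ) : ℝ) * (1 - p₀) ^ (N - k - 1) * (-1))) = 0 := by
    rcases mul_eq_zero.mp h0 with h | h
    · exact absurd h (ne_of_gt hR)
    · exact h
  -- key identity: f(p₀) = M * T(p₀)
  have hid := aux_identity N M hM hMN p₀
  rw [hD0, mul_zero] at hid
  have hFT : (∑ k ∈ Finset.Icc 1 M, (k : ℝ) * (N.choose k : ℝ) * p₀ ^ k * (1 - p₀) ^ (N - k)) =
      (M : ℝ) * (((M : ℝ) + 1) * (N.choose (M + 1) : ℝ) * p₀ ^ (M + 1) * (1 - p₀) ^ (N - (M + 1))) := by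
    linarith [hid]
  set T : ℝ := ((M : ℝ) + 1) * (N.choose (M + 1) : ℝ) * p₀ ^ (M + 1) * (1 - p₀) ^ (N - (M + 1))
    with hT
  have hsum : SN N (M + 1) R p₀ = SN N M R p₀ + R * T := by
    unfold SN
    rw [Finset.sum_Icc_succ_top (by omega : 1 ≤ M + 1)]
    push_cast
    ring
  have hMT : (M : ℝ) * (R * T) = SN N M R p₀ := by
    unfold SN
    rw [hFT]
    ring
  -- bound the sSup for M+1 from below
  have hbdd : BddAbove ((fun p => SN N (M + 1) R p) '' Set.Icc (0:ℝ) 1) :=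
    (isCompact_Icc.image_of_continuousOn (hcont (M + 1))).bddAbove
  have hB : SN N (M + 1) R p₀ ≤ sSup ((fun p => SN N (M + 1) R p) '' Set.Icc (0:ℝ) 1) :=
    le_csSup hbdd (Set.mem_image_of_mem _ hp₀mem)
  -- final arithmetic
  rw [himg]
  rw [div_le_div_iff₀ hM0 (by positivity)]
  have h1 : (SN N M R p₀ + R * T) * (M : ℝ) ≤
      sSup ((fun p => SN N (M + 1) R p) '' Set.Icc (0:ℝ) 1) * (M : ℝ) := by
    apply mul_le_mul_of_nonneg_right _ (le_of_lt hM0)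
    rw [← hsum]
    exact hB
  nlinarith [hMT, h1]
end
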